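/- If an impartial game with activeness G^g is equivalent to a nimber with activeness *^γ n for some γ ∈ {0,1}^∞, then n equals the ordinary Grundy value 𝒢(G^g). -/
import Mathlib


inductive AGame : Type where
  | mk : List AGame → Bool → AGame

namespace AGame

noncomputable instance : DecidableEq AGame := Classical.decEq _

def opts : AGame → List AGame | mk gs _ => gs
def act : AGame → Bool | mk _ g => g

theorem sizeOf_lt_of_mem {G G' : AGame} (h : G' ∈ G.opts) : sizeOf G' < sizeOf G := by
  cases G with
  | mk gs g =>
    simp only [opts] at h
    have := List.sizeOf_lt_of_mem h
    simp [AGame.mk.sizeOf_spec]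
    omega

/-- Disjunctive sum of games with activeness. -/
def add (G H : AGame) : AGame :=
  mk (G.opts.attach.map (fun x => add x.1 H) ++
      H.opts.attach.map (fun y => add G y.1)) (G.act || H.act)
termination_by sizeOf G + sizeOf H
decreasing_by
  · have := sizeOf_lt_of_mem x.2; omega
  · have := sizeOf_lt_of_mem y.2; omega

/-- `PPos G` means the outcome of `G` is 𝒫 (second player wins). -/
def PPos (G : AGame) : Prop :=
  G.act = false ∨ ∀ G' ∈ G.opts.attach, ¬ PPos G'.1
termination_by sizeOf G
decreasing_by
  have := sizeOf_lt_of_mem G'.2; omega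

/-- Hereditary set-equality (the paper's ≅). -/
def Identical (G H : AGame) : Prop :=
  G.act = H.act ∧ (∀ G' ∈ G.opts.attach, ∃ H' ∈ H.opts.attach, Identical G'.1 H'.1)
              ∧ (∀ H' ∈ H.opts.attach, ∃ G' ∈ G.opts.attach, Identical G'.1 H'.1)
termination_by sizeOf G + sizeOf H
decreasing_by
  · have := sizeOf_lt_of_mem G'.2; have := sizeOf_lt_of_mem H'.2; omega
  · have := sizeOf_lt_of_mem G'.2; have := sizeOf_lt_of_mem H'.2; omega

/-- Equivalence of games with activeness: same outcome in every sum. -/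
def Equiv (G H : AGame) : Prop := ∀ X : AGame, (PPos (add G X) ↔ PPos (add H X))

end AGame

namespace AGame

/-- Nimbers with activeness: `star γ n ≅ {star γ j : j < n}^{γ n}`. -/
def star (γ : ℕ → Bool) : ℕ → AGame
  | n => mk ((List.range n).attach.map (fun j => star γ j.1)) (γ n)
termination_by n => n
decreasing_by
  have := j.2; simp [List.mem_range] at this; omega

/-- The generalized Grundy set `𝒢^γ(G)`. -/
def GSet (γ : ℕ → Bool) (G : AGame) : Set ℕ := {n | PPos (add G (star γ n))}

/-- Minimum excludant of a set of naturals. -/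
noncomputable def mex (S : Set ℕ) : ℕ := sInf {n | n ∉ S}

/-- Ordinary Grundy value, computed ignoring activeness. -/
noncomputable def grundy (G : AGame) : ℕ :=
  mex {m | ∃ G' ∈ G.opts.attach, grundy G'.1 = m}
termination_by sizeOf G
decreasing_by
  have := sizeOf_lt_of_mem G'.2; omega

/-- The three types of games with activeness. -/
inductive AType : Type where
  | inactive : AType            -- type 0
  | activeSomeInactive : AType  -- type 1_{∃0}
  | activeAllActive : AType     -- type 1_{∀1}

open Classical in
/-- `type(G^g)`. -/
noncomputable def typ (G : AGame) : AType :=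
  if G.act = false then .inactive
  else if ∃ G' ∈ G.opts, G'.act = false then .activeSomeInactive
  else .activeAllActive

/-- Formal birthday `b(G)`. -/
def bday (G : AGame) : ℕ :=
  (G.opts.attach.map (fun G' => bday G'.1 + 1)).foldr max 0
termination_by sizeOf G
decreasing_by
  have := sizeOf_lt_of_mem G'.2; omega

/-- An option `G'` of `G` is reversible if it has an option equivalent to `G`. -/
def Reversible (G G' : AGame) : Prop := ∃ G'' ∈ G'.opts, Equiv G'' G

/-- A canonical game: all options canonical and no option reversible. -/
def Canonical (G : AGame) : Prop :=
  (∀ G' ∈ G.opts.attach, Canonical G'.1) ∧ (∀ G' ∈ G.opts, ¬ Reversible G G')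
termination_by sizeOf G
decreasing_by
  have := sizeOf_lt_of_mem G'.2; omega

/-- A transitive game: all options transitive and options of options are options. -/
def TransGame (G : AGame) : Prop :=
  (∀ G' ∈ G.opts.attach, TransGame G'.1) ∧ (∀ G' ∈ G.opts, ∀ G'' ∈ G'.opts, G'' ∈ G.opts)
termination_by sizeOf G
decreasing_by
  have := sizeOf_lt_of_mem G'.2; omega

/-- `G` is covered by `H` if every option of `G` is equivalent to some option of `H`. -/
def Covered (G H : AGame) : Prop := ∀ G' ∈ G.opts, ∃ H' ∈ H.opts, Equiv G' H'

/-- The relation `G ⋈ H`. -/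
def Bowtie (G H : AGame) : Prop :=
  (∀ G' ∈ G.opts, ¬ Equiv G' H) ∧ (∀ H' ∈ H.opts, ¬ Equiv G H')

/-- The linear chain `∅^{g₀ g₁ … gₙ}`. -/
def chain (g : ℕ → Bool) : ℕ → AGame
  | 0 => mk [] (g 0)
  | n + 1 => mk [chain g n] (g (n + 1))

end AGame

namespace AGame

lemma opts_mk (gs : List AGame) (g : Bool) : (mk gs g).opts = gs := rfl
lemma act_mk (gs : List AGame) (g : Bool) : (mk gs g).act = g := rfl

lemma act_add (G H : AGame) : (add G H).act = (G.act || H.act) := by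
  rw [add, act_mk]

lemma mem_opts_add {G H X : AGame} :
    X ∈ (add G H).opts ↔ (∃ G' ∈ G.opts, X = add G' H) ∨ (∃ H' ∈ H.opts, X = add G H') := by
  rw [add, opts_mk]
  simp only [List.mem_append, List.mem_map, List.mem_attach, true_and, Subtype.exists,
    exists_prop, eq_comm]

lemma act_star (γ : ℕ → Bool) (n : ℕ) : (star γ n).act = γ n := by
  rw [star, act_mk]

lemma mem_opts_star {γ : ℕ → Bool} {n : ℕ} {X : AGame} :
    X ∈ (star γ n).opts ↔ ∃ j < n, X = star γ j := by
  rw [star, opts_mk]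
  simp only [List.mem_map, List.mem_attach, true_and, Subtype.exists, List.mem_range,
    exists_prop, eq_comm]

lemma PPos_iff (G : AGame) : PPos G ↔ (G.act = false ∨ ∀ G' ∈ G.opts, ¬ PPos G') := by
  rw [PPos]
  simp only [List.mem_attach, true_implies, Subtype.forall]

lemma grundy_unfold (G : AGame) :
    grundy G = mex {m | ∃ G' ∈ G.opts, grundy G' = m} := by
  rw [grundy]
  congr 1
  ext m
  simp only [List.mem_attach, true_and, Subtype.exists, Set.mem_setOf_eq, exists_prop]

lemma gset_finite (G : AGame) : Set.Finite {m | ∃ G' ∈ G.opts, grundy G' = m} := by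
  have : {m | ∃ G' ∈ G.opts, grundy G' = m} = grundy '' {G' | G' ∈ G.opts} := by
    ext m; simp [Set.image]
  rw [this]
  exact (G.opts.finite_toSet).image _

lemma grundy_not_mem (G : AGame) : ∀ G' ∈ G.opts, grundy G' ≠ grundy G := by
  intro G' hG' heq
  have hne : {n | n ∉ {m | ∃ G'' ∈ G.opts, grundy G'' = m}}.Nonempty := by
    have := (gset_finite G).infinite_compl
    exact this.nonempty
  have hmem := Nat.sInf_mem hne
  have h2 : grundy G ∉ {m | ∃ G'' ∈ G.opts, grundy G'' = m} := by
    rw [grundy_unfold, mex]; exact hmem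
  exact h2 ⟨G', hG', heq⟩

lemma grundy_le (G : AGame) (m : ℕ) (h : ∀ G' ∈ G.opts, grundy G' ≠ m) : grundy G ≤ m := by
  rw [grundy_unfold, mex]
  exact Nat.sInf_le (by simpa using h)

lemma grundy_mem (G : AGame) (j : ℕ) (h : j < grundy G) : ∃ G' ∈ G.opts, grundy G' = j := by
  by_contra hc
  exact absurd (grundy_le G j (by simpa using hc)) (by omega)

lemma grundy_star (γ : ℕ → Bool) (n : ℕ) : grundy (star γ n) = n := by
  induction n using Nat.strong_induction_on with
  | _ n ih =>
    rw [grundy_unfold]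
    have hs : {m | ∃ G' ∈ (star γ n).opts, grundy G' = m} = {m | m < n} := by
      ext m
      simp only [Set.mem_setOf_eq, mem_opts_star]
      constructor
      · rintro ⟨G', ⟨j, hj, rfl⟩, rfl⟩
        rw [ih j hj]; exact hj
      · intro hm
        exact ⟨star γ m, ⟨m, hm, rfl⟩, ih m hm⟩
    rw [hs, mex]
    have : {k | k ∉ {m | m < n}} = Set.Ici n := by
      ext k; simp [Set.mem_Ici]
    rw [this, csInf_Ici]

lemma key : ∀ k : ℕ, ∀ G : AGame, ∀ m : ℕ, sizeOf G + m < k →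
    (PPos (add G (star (fun _ => true) m)) ↔ grundy G = m) := by
  intro k
  induction k with
  | zero => intro G m h; omega
  | succ k ih =>
    intro G m hk
    rw [PPos_iff, act_add, act_star]
    simp only [Bool.or_true, Bool.true_eq_false, false_or]
    have hopt : ∀ X ∈ (add G (star (fun _ => true) m)).opts,
        (∃ G' ∈ G.opts, X = add G' (star (fun _ => true) m)) ∨
        (∃ j < m, X = add G (star (fun _ => true) j)) := by
      intro X hX
      rcases mem_opts_add.mp hX with ⟨G', hG', rfl⟩ | ⟨H', hH', rfl⟩
      · exact Or.inl ⟨G', hG', rfl⟩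
      · rcases mem_opts_star.mp hH' with ⟨j, hj, rfl⟩
        exact Or.inr ⟨j, hj, rfl⟩
    constructor
    · intro hall
      have hA : ∀ G' ∈ G.opts, grundy G' ≠ m := by
        intro G' hG' heq
        have hx : add G' (star (fun _ => true) m) ∈ (add G (star (fun _ => true) m)).opts :=
          mem_opts_add.mpr (Or.inl ⟨G', hG', rfl⟩)
        have := hall _ hx
        have hsz := sizeOf_lt_of_mem hG'
        exact this ((ih G' m (by omega)).mpr heq)
      have hB : ∀ j, j < m → grundy G ≠ j := by
        intro j hj heq
        have hx : add G (star (fun _ => true) j) ∈ (add G (star (fun _ => true) m)).opts :=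
          mem_opts_add.mpr (Or.inr ⟨star (fun _ => true) j, mem_opts_star.mpr ⟨j, hj, rfl⟩, rfl⟩)
        exact hall _ hx ((ih G j (by omega)).mpr heq)
      have h1 := grundy_le G m hA
      rcases lt_or_eq_of_le h1 with h2 | h2
      · exact absurd rfl (hB _ h2)
      · exact h2
    · intro hg X hX hP
      rcases hopt X hX with ⟨G', hG', rfl⟩ | ⟨j, hj, rfl⟩
      · have hsz := sizeOf_lt_of_mem hG'
        have := (ih G' m (by omega)).mp hP
        exact grundy_not_mem G G' hG' (this.trans hg.symm)
      · have := (ih G j (by omega)).mp hP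
        omega

lemma key' (G : AGame) (m : ℕ) :
    PPos (add G (star (fun _ => true) m)) ↔ grundy G = m :=
  key (sizeOf G + m + 1) G m (by omega)

end AGame

/-- A game equivalent to a nimber with activeness `*^γ n` has ordinary Grundy value `n`. -/
theorem AGame.grundy_of_equiv_star (G : AGame) (γ : ℕ → Bool) (n : ℕ)
    (h : AGame.Equiv G (AGame.star γ n)) :
    AGame.grundy G = n := by
  have h1 : PPos (add (star γ n) (star (fun _ => true) n)) :=
    (key' (star γ n) n).mpr (grundy_star γ n)
  have h2 : PPos (add G (star (fun _ => true) n)) :=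
    (h (star (fun _ => true) n)).mpr h1
  exact (key' G n).mp h2
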